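/- arXiv:2107.01888 — 12 statements merged into one kernel-verified Lean document; each statement's English description precedes it below -/
import Mathlib

section
/- For all nonzero real numbers a, b and every integer n ≥ 3: if n is odd then deg 𝓑_{a,b}^n ≤ (n²−1)/4, and if n is even then deg 𝓑_{a,b}^n ≤ n²/4 − 1 (degree as a polynomial in X, with the zero polynomial having degree 0 or −∞ by convention). -/
/-- The k-th Taylor coefficient of √(1+t) at t = 0:
`c k = (−1)^(k+1)·(2k choose k)/(4^k·(2k−1))` (note `2k−1 = −1` when `k = 0`, so `c 0 = 1`). -/
noncomputable def sqrtCoeff (k : ℕ) : ℚ :=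
  (-1) ^ (k + 1) * (Nat.choose (2 * k) k : ℚ) / (4 ^ k * (2 * (k : ℚ) - 1))

/-- The polynomial `B_k^{a,b} = Σ_{u+v+w=k} c_u c_v c_w · a^{−u} b^{−v} · (a−X)^u (b−X)^v`. -/
noncomputable def Bpoly (a b : ℝ) (k : ℕ) : Polynomial ℝ :=
  ∑ u ∈ Finset.range (k + 1), ∑ v ∈ Finset.range (k + 1 - u),
    Polynomial.C ((sqrtCoeff u : ℝ) * (sqrtCoeff v : ℝ) * (sqrtCoeff (k - u - v) : ℝ)
        * a⁻¹ ^ u * b⁻¹ ^ v) *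
      (Polynomial.C a - Polynomial.X) ^ u * (Polynomial.C b - Polynomial.X) ^ v

/-- Cayley's determinant `𝓑_{a,b}^n`: for odd `n = 2m+1` it is the determinant of the
`m×m` matrix with `(i,j)` entry `B_{i+j}` (`1 ≤ i,j ≤ m`); for even `n = 2m` it is the
determinant of the `(m−1)×(m−1)` matrix with `(i,j)` entry `B_{i+j+1}` (`1 ≤ i,j ≤ m−1`). -/
noncomputable def cayleyPoly (a b : ℝ) (n : ℕ) : Polynomial ℝ :=
  if Odd n then
    Matrix.det (Matrix.of fun i j : Fin (n / 2) => Bpoly a b (i.val + j.val + 2))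
  else
    Matrix.det (Matrix.of fun i j : Fin (n / 2 - 1) => Bpoly a b (i.val + j.val + 3))

lemma natDegree_Bpoly_le (a b : ℝ) (k : ℕ) : (Bpoly a b k).natDegree ≤ k := by
  unfold Bpoly
  refine Polynomial.natDegree_sum_le_of_forall_le _ _ fun u hu => ?_
  refine Polynomial.natDegree_sum_le_of_forall_le _ _ fun v hv => ?_
  simp only [Finset.mem_range] at hu hv
  calc (Polynomial.C ((sqrtCoeff u : ℝ) * (sqrtCoeff v : ℝ) * (sqrtCoeff (k - u - v) : ℝ)
        * a⁻¹ ^ u * b⁻¹ ^ v) *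
      (Polynomial.C a - Polynomial.X) ^ u * (Polynomial.C b - Polynomial.X) ^ v).natDegree
      ≤ (Polynomial.C ((sqrtCoeff u : ℝ) * (sqrtCoeff v : ℝ) * (sqrtCoeff (k - u - v) : ℝ)
        * a⁻¹ ^ u * b⁻¹ ^ v) *
      (Polynomial.C a - Polynomial.X) ^ u).natDegree
        + ((Polynomial.C b - Polynomial.X) ^ v).natDegree := Polynomial.natDegree_mul_le
    _ ≤ (0 + u * 1) + v * 1 := by
        gcongr
        · refine Polynomial.natDegree_mul_le.trans ?_
          gcongr
          · exact le_of_eq (Polynomial.natDegree_C _)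
          · refine Polynomial.natDegree_pow_le.trans ?_
            gcongr
            exact (Polynomial.natDegree_sub_le _ _).trans (by simp)
        · refine Polynomial.natDegree_pow_le.trans ?_
          gcongr
          exact (Polynomial.natDegree_sub_le _ _).trans (by simp)
    _ ≤ k := by omega

lemma natDegree_det_le' {m : ℕ} (M : Matrix (Fin m) (Fin m) (Polynomial ℝ))
    (d e : Fin m → ℕ) (h : ∀ i j, (M i j).natDegree ≤ d i + e j) :
    M.det.natDegree ≤ (∑ i, d i) + ∑ j, e j := by
  rw [Matrix.det_apply]
  refine Polynomial.natDegree_sum_le_of_forall_le _ _ fun σ _ => ?_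
  rw [Units.smul_def, zsmul_eq_mul]
  refine Polynomial.natDegree_mul_le.trans ?_
  rw [Polynomial.natDegree_intCast, zero_add]
  refine Polynomial.natDegree_prod_le _ _ |>.trans ?_
  calc ∑ i, (M (σ i) i).natDegree ≤ ∑ i, (d (σ i) + e i) :=
        Finset.sum_le_sum fun i _ => h (σ i) i
    _ = (∑ i, d i) + ∑ j, e j := by
        rw [Finset.sum_add_distrib, Equiv.sum_comp σ d]

/-- Degree bound for Cayley's determinant: `deg 𝓑_{a,b}^n ≤ (n²−1)/4` for odd `n` and
`deg 𝓑_{a,b}^n ≤ n²/4 − 1` for even `n` (Proposition 2.21). -/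
theorem cayleyPoly_natDegree_le (a b : ℝ) (ha : a ≠ 0) (hb : b ≠ 0) (n : ℕ) (hn : 3 ≤ n) :
    (Odd n → (cayleyPoly a b n).natDegree ≤ (n ^ 2 - 1) / 4) ∧
    (Even n → (cayleyPoly a b n).natDegree ≤ n ^ 2 / 4 - 1) := by
  constructor
  · intro hodd
    rw [cayleyPoly, if_pos hodd]
    refine (natDegree_det_le' _ (fun i => i.val + 2) (fun j => j.val)
      (fun i j => (natDegree_Bpoly_le a b _).trans (by omega))).trans ?_
    obtain ⟨m, hm⟩ := hodd
    have h2 : n / 2 = m := by omega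
    set T := ∑ j ∈ Finset.range m, j with hTdef
    have hT : T * 2 = m * (m - 1) := Finset.sum_range_id_mul_two m
    have hA : ∑ j : Fin (n / 2), (j : ℕ) = T := by
      rw [h2]; exact Fin.sum_univ_eq_sum_range (fun i => i) m
    have hB : ∑ i : Fin (n / 2), ((i : ℕ) + 2) = T + 2 * m := by
      rw [h2, Fin.sum_univ_eq_sum_range (fun i => i + 2) m, Finset.sum_add_distrib,
        Finset.sum_const, Finset.card_range, smul_eq_mul, hTdef, mul_comm]
    have hq : n ^ 2 = 4 * (m * (m + 1)) + 1 := by rw [hm]; ring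
    have hgoal : (n ^ 2 - 1) / 4 = m * (m + 1) := by
      rw [hq, Nat.add_sub_cancel, Nat.mul_div_cancel_left _ (by norm_num)]
    have hfin : m * (m - 1) + 2 * m = m * (m + 1) := by
      cases m with
      | zero => rfl
      | succ k => simp only [Nat.succ_sub_one]; ring
    rw [hA, hB, hgoal]
    exact (calc (T + 2 * m) + T = T * 2 + 2 * m := by ring
      _ = m * (m - 1) + 2 * m := by rw [hT]
      _ = m * (m + 1) := hfin).le
  · intro heven
    rw [cayleyPoly, if_neg (by simpa [Nat.not_odd_iff_even] using heven)]
    refine (natDegree_det_le' _ (fun i => i.val + 3) (fun j => j.val)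
      (fun i j => (natDegree_Bpoly_le a b _).trans (by omega))).trans ?_
    obtain ⟨m, hm⟩ := heven
    have hm2 : 2 ≤ m := by omega
    have h2 : n / 2 - 1 = m - 1 := by omega
    set s := m - 1 with hsdef
    have hns : n = 2 * (s + 1) := by omega
    set T := ∑ j ∈ Finset.range s, j with hTdef
    have hT : T * 2 = s * (s - 1) := Finset.sum_range_id_mul_two s
    have hA : ∑ j : Fin (n / 2 - 1), (j : ℕ) = T := by
      rw [h2]; exact Fin.sum_univ_eq_sum_range (fun i => i) s
    have hB : ∑ i : Fin (n / 2 - 1), ((i : ℕ) + 3) = T + 3 * s := by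
      rw [h2, Fin.sum_univ_eq_sum_range (fun i => i + 3) s, Finset.sum_add_distrib,
        Finset.sum_const, Finset.card_range, smul_eq_mul, hTdef, mul_comm]
    have hq : n ^ 2 = 4 * ((s + 1) * (s + 1)) := by rw [hns]; ring
    have hq2 : (s + 1) * (s + 1) = s * (s + 2) + 1 := by ring
    have hgoal : n ^ 2 / 4 - 1 = s * (s + 2) := by
      rw [hq, Nat.mul_div_cancel_left _ (by norm_num), hq2, Nat.add_sub_cancel]
    have hfin : s * (s - 1) + 3 * s = s * (s + 2) := by
      cases s with
      | zero => rfl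
      | succ k => simp only [Nat.succ_sub_one]; ring
    rw [hA, hB, hgoal]
    exact (calc (T + 3 * s) + T = T * 2 + 3 * s := by ring
      _ = s * (s - 1) + 3 * s := by rw [hT]
      _ = s * (s + 2) := hfin).le
end

section
/- For every integer n ≥ 3 there exists a finite set R' ⊂ ℝ such that for all nonzero real numbers a, b with a/b ∉ R', neither a nor b is a root of 𝓑_{a,b}^n, i.e. 𝓑_{a,b}^n(a) ≠ 0 and 𝓑_{a,b}^n(b) ≠ 0. -/
def Tb : ℕ → ℕ → ℕ
  | 0, 0 => 1
  | 0, _+1 => 0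
  | m+1, 0 => Tb m 1
  | m+1, j+1 => Tb m j + Tb m (j+2)

lemma Tb_eq_zero : ∀ m j, m < j → Tb m j = 0 := by
  intro m
  induction m with
  | zero => intro j hj; match j, hj with | j+1, _ => rfl
  | succ m ih =>
    intro j hj
    match j, hj with
    | j+1, hj => simp [Tb, ih j (by omega), ih (j+2) (by omega)]

lemma Tb_diag : ∀ m, Tb m m = 1 := by
  intro m
  induction m with
  | zero => rfl
  | succ m ih => simp [Tb, ih, Tb_eq_zero m (m+2) (by omega)]

lemma Tb_closed : ∀ m j k, j + 2*k = m →
    (Tb m j : ℤ) = (Nat.choose m k : ℤ) - (if k = 0 then 0 else (Nat.choose m (k-1) : ℤ)) := by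
  intro m
  induction m using Nat.strong_induction_on with
  | _ m ih =>
    intro j k hm
    match k with
    | 0 =>
      simp at hm; subst hm; simp [Tb_diag]
    | k'+1 =>
      match j with
      | 0 =>
        have hm2 : m = (2*k'+1)+1 := by omega
        subst hm2
        have e : Tb ((2*k'+1)+1) 0 = Tb (2*k'+1) 1 := rfl
        rw [e, ih (2*k'+1) (by omega) 1 k' (by omega)]
        have hs : ((2*k'+1)+1).choose (k'+1) = (2*k'+1).choose k' + (2*k'+1).choose (k'+1) :=
          Nat.choose_succ_succ _ _
        have hsym : (2*k'+1).choose (k'+1) = (2*k'+1).choose k' := Nat.choose_symm_half k'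
        rcases Nat.eq_zero_or_pos k' with h|h
        · subst h; simp
        · have hk : k' ≠ 0 := by omega
          have hs2 : ((2*k'+1)+1).choose k' = (2*k'+1).choose (k'-1) + (2*k'+1).choose k' := by
            rw [show k' = (k'-1)+1 by omega, Nat.choose_succ_succ]
            congr 2 <;> omega
          simp only [if_neg hk, if_neg (Nat.succ_ne_zero k')]
          push_cast [hs, hsym, hs2]
          push_cast [Nat.add_sub_cancel]
          ring
      | j'+1 =>
        have hm2 : m = (j'+2*(k'+1))+1 := by omega
        subst hm2
        have e : Tb ((j'+2*(k'+1))+1) (j'+1) = Tb (j'+2*(k'+1)) j' + Tb (j'+2*(k'+1)) (j'+2) := rfl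
        rw [e]
        push_cast
        rw [ih _ (by omega) j' (k'+1) rfl, ih _ (by omega) (j'+2) k' (by omega)]
        have hp : ((j'+2*(k'+1))+1).choose (k'+1) =
            (j'+2*(k'+1)).choose k' + (j'+2*(k'+1)).choose (k'+1) := Nat.choose_succ_succ _ _
        rcases Nat.eq_zero_or_pos k' with h|h
        · subst h
          simp only [if_neg (Nat.succ_ne_zero 0)]
          have hp0 : ((j'+2*1)+1).choose 0 = 1 := Nat.choose_zero_right _
          have hq0 : (j'+2*1).choose 0 = 1 := Nat.choose_zero_right _
          push_cast [hp, Nat.add_sub_cancel, hp0, hq0]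
          simp
        · have hk : k' ≠ 0 := by omega
          have hp2 : ((j'+2*(k'+1))+1).choose k' =
              (j'+2*(k'+1)).choose (k'-1) + (j'+2*(k'+1)).choose k' := by
            rw [show k' = (k'-1)+1 by omega, Nat.choose_succ_succ]
            congr 2 <;> omega
          simp only [if_neg hk, if_neg (Nat.succ_ne_zero k')]
          push_cast [hp, hp2, Nat.add_sub_cancel]
          ring

open Finset in
lemma Tb_half (m m' N : ℕ) (hm : m ≤ N + 1) :
    ∑ k ∈ range (N+2), Tb (m+1) k * Tb m' k =
      (∑ k ∈ range (N+1), Tb m k * Tb m' (k+1)) +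
      (∑ k ∈ range (N+1), Tb m (k+1) * Tb m' k) := by
  rw [Finset.sum_range_succ' (fun k => Tb (m+1) k * Tb m' k) (N+1)]
  have e0 : Tb (m+1) 0 = Tb m 1 := rfl
  have e1 : ∀ k, Tb (m+1) (k+1) = Tb m k + Tb m (k+2) := fun k => rfl
  simp only [e0, e1, add_mul, Finset.sum_add_distrib]
  -- goal: Σ_{range(N+1)} Tb m k * Tb m' (k+1) + Σ_{range(N+1)} Tb m (k+2) * Tb m' (k+1) + Tb m 1 * Tb m' 0 = ...
  have h2 : (∑ k ∈ range (N+1), Tb m (k+2) * Tb m' (k+1)) + Tb m 1 * Tb m' 0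
      = ∑ k ∈ range (N+1), Tb m (k+1) * Tb m' k := by
    rw [Finset.sum_range_succ (fun k => Tb m (k+2) * Tb m' (k+1)) N,
      Tb_eq_zero m (N+2) (by omega)]
    rw [Finset.sum_range_succ' (fun k => Tb m (k+1) * Tb m' k) N]
    ring
  omega

open Finset in
lemma Tb_shift (m m' N : ℕ) (hm : m ≤ N + 1) (hm' : m' ≤ N + 1) :
    ∑ k ∈ range (N+2), Tb (m+1) k * Tb m' k = ∑ k ∈ range (N+2), Tb m k * Tb (m'+1) k := by
  rw [Tb_half m m' N hm]
  have := Tb_half m' m N hm'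
  simp only [mul_comm] at this ⊢
  omega

open Finset in
lemma Tb_gram : ∀ m m' N, m + m' ≤ N →
    ∑ k ∈ range (N+1), Tb m k * Tb m' k = Tb (m+m') 0 := by
  intro m
  induction m with
  | zero =>
    intro m' N h
    rw [Finset.sum_eq_single 0]
    · simp [Tb]
    · intro k _ hk
      match k, hk with
      | k+1, _ => simp [Tb]
    · intro h0; exact absurd (Finset.mem_range.2 (by omega)) h0
  | succ m ih =>
    intro m' N h
    obtain ⟨N', rfl⟩ : ∃ N', N = N' + 1 := ⟨N - 1, by omega⟩
    rw [Tb_shift m m' N' (by omega) (by omega), ih (m'+1) (N'+1) (by omega)]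
    congr 1
    omega

lemma succ_mul_Tb (n : ℕ) : ((n+1) * Tb (2*n) 0 : ℤ) = Nat.centralBinom n := by
  match n with
  | 0 => decide
  | m+1 =>
    rw [Tb_closed (2*(m+1)) 0 (m+1) (by omega)]
    simp only [if_neg (Nat.succ_ne_zero m), Nat.add_sub_cancel]
    have h := Nat.choose_succ_right_eq (2*(m+1)) m
    have h2 : 2*(m+1) - m = m + 2 := by omega
    rw [h2] at h
    have hc : ((2*(m+1)).choose (m+1) : ℤ) * (m+1) = ((2*(m+1)).choose m : ℤ) * (m+2) := by
      exact_mod_cast congrArg (Nat.cast : ℕ → ℤ) h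
    unfold Nat.centralBinom
    push_cast
    linarith


lemma centralBinom_succ_eq (n : ℕ) :
    (Nat.centralBinom (n+1) : ℤ) = 2*(2*(n:ℤ)+1) * Tb (2*n) 0 := by
  have h1 : ((n:ℤ)+1) * Nat.centralBinom (n+1) = 2*(2*(n:ℤ)+1) * Nat.centralBinom n := by
    exact_mod_cast congrArg (Nat.cast : ℕ → ℤ) (Nat.succ_mul_centralBinom_succ n)
  have h2 := succ_mul_Tb n
  have hn : ((n:ℤ)+1) ≠ 0 := by positivity
  have : ((n:ℤ)+1) * Nat.centralBinom (n+1) = ((n:ℤ)+1) * (2*(2*(n:ℤ)+1) * Tb (2*n) 0) := by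
    rw [h1, ← h2]; ring
  exact mul_left_cancel₀ hn this

lemma sqrtCoeff_zero : sqrtCoeff 0 = 1 := by norm_num [sqrtCoeff]

lemma sqrtCoeff_real (n : ℕ) :
    (sqrtCoeff (n+1) : ℝ) = (-1)^n * 2 * (Tb (2*n) 0 : ℝ) / 4^(n+1) := by
  have hc : ((2*(n+1)).choose (n+1) : ℝ) = 2*(2*(n:ℝ)+1) * Tb (2*n) 0 := by
    have := centralBinom_succ_eq n
    unfold Nat.centralBinom at this
    exact_mod_cast congrArg (Int.cast : ℤ → ℝ) this
  unfold sqrtCoeff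
  push_cast
  rw [hc]
  have h1 : (2*((n:ℝ)+1) - 1) = 2*(n:ℝ)+1 := by ring
  rw [h1]
  have h2 : (2*(n:ℝ)+1) ≠ 0 := by positivity
  have h4 : ((4:ℝ))^(n+1) ≠ 0 := by positivity
  field_simp
  ring

open Matrix in
lemma det_Tb_ne_zero (sz o : ℕ) :
    (Matrix.of fun i j : Fin sz => (Tb (2*(i.val + j.val + o)) 0 : ℝ)).det ≠ 0 := by
  set N := 4*sz + 2*o with hN
  set A : Matrix (Fin sz) (Fin (N+1)) ℝ := Matrix.of (fun i k => (Tb (2*i.val+o) k.val : ℝ)) with hA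
  have hM : (Matrix.of fun i j : Fin sz => (Tb (2*(i.val + j.val + o)) 0 : ℝ)) = A * Aᵀ := by
    ext i j
    simp only [Matrix.mul_apply, Matrix.transpose_apply, hA, Matrix.of_apply]
    rw [Fin.sum_univ_eq_sum_range (fun k => ((Tb (2*i.val+o) k : ℝ) * (Tb (2*j.val+o) k : ℝ)))]
    have := Tb_gram (2*i.val+o) (2*j.val+o) N (by have := i.2; have := j.2; omega)
    have hcast : ((∑ k ∈ Finset.range (N+1), Tb (2*i.val+o) k * Tb (2*j.val+o) k : ℕ) : ℝ)
        = ((Tb ((2*i.val+o)+(2*j.val+o)) 0 : ℕ) : ℝ) := by rw [this]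
    push_cast at hcast
    rw [hcast]
    congr 2
    omega
  rw [hM]
  intro hdet
  obtain ⟨v, hv, hMv⟩ := (Matrix.exists_mulVec_eq_zero_iff).2 hdet
  have hu : ∀ k, (v ᵥ* A) k = 0 := by
    have h0 : v ⬝ᵥ (A * Aᵀ) *ᵥ v = 0 := by rw [hMv]; simp
    rw [← Matrix.mulVec_mulVec, Matrix.mulVec_transpose, Matrix.dotProduct_mulVec] at h0
    intro k
    have hnn : ∀ k' ∈ Finset.univ, (0:ℝ) ≤ (v ᵥ* A) k' * (v ᵥ* A) k' := fun k' _ => mul_self_nonneg _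
    have := (Finset.sum_eq_zero_iff_of_nonneg hnn).1 h0 k (Finset.mem_univ k)
    exact mul_self_eq_zero.1 this
  -- now show v = 0
  have main : ∀ i : Fin sz, (∀ i' : Fin sz, i.val < i'.val → v i' = 0) → v i = 0 := by
    intro i hgt
    have hk : 2*i.val + o < N + 1 := by have := i.2; omega
    have h := hu ⟨2*i.val + o, hk⟩
    simp only [Matrix.vecMul, dotProduct, hA, Matrix.of_apply] at h
    rw [Finset.sum_eq_single i] at h
    · rwa [Tb_diag, Nat.cast_one, mul_one] at h
    · intro i' _ hne
      rcases Nat.lt_or_ge i'.val i.val with hlt|hge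
      · rw [Tb_eq_zero (2*i'.val+o) (2*i.val+o) (by omega), Nat.cast_zero, mul_zero]
      · have : i.val < i'.val := lt_of_le_of_ne hge (fun hh => hne (Fin.ext hh.symm))
        rw [hgt i' this, zero_mul]
    · intro hnm; exact absurd (Finset.mem_univ i) hnm
  have key : ∀ t (i : Fin sz), sz ≤ t + i.val + 1 → v i = 0 := by
    intro t
    induction t with
    | zero => intro i hi; exact main i (fun i' hi' => absurd i'.2 (by omega))
    | succ t ih => intro i hi; exact main i (fun i' hi' => ih i' (by omega))
  exact hv (funext fun i => key sz i (by omega))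

lemma det_sqrtCoeff_ne_zero (sz o : ℕ) :
    (Matrix.of fun i j : Fin sz => (sqrtCoeff (i.val+j.val+o+1) : ℝ)).det ≠ 0 := by
  set e : Fin sz → ℝ := fun i => (-1)^i.val * ((4:ℝ)⁻¹)^i.val with he
  set κ : ℝ := (-1)^o * 2 / 4^(o+1) with hκ
  set G : Matrix (Fin sz) (Fin sz) ℝ :=
    Matrix.of fun i j : Fin sz => (Tb (2*(i.val + j.val + o)) 0 : ℝ) with hG
  have hM : (Matrix.of fun i j : Fin sz => (sqrtCoeff (i.val+j.val+o+1) : ℝ))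
      = Matrix.diagonal e * (κ • G) * Matrix.diagonal e := by
    ext i j
    rw [Matrix.mul_diagonal, Matrix.diagonal_mul]
    simp only [Matrix.smul_apply, hG, Matrix.of_apply, smul_eq_mul, he, hκ]
    rw [sqrtCoeff_real (i.val+j.val+o)]
    rw [show (-1:ℝ)^(i.val+j.val+o) = (-1)^i.val * (-1)^j.val * (-1)^o by
      rw [pow_add, pow_add]]
    rw [show ((4:ℝ))^(i.val+j.val+o+1) = 4^i.val * 4^j.val * 4^(o+1) by
      rw [show i.val+j.val+o+1 = i.val + (j.val + (o+1)) by omega, pow_add, pow_add]; ring]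
    rw [inv_pow, inv_pow]
    have h1 : ((4:ℝ))^i.val ≠ 0 := by positivity
    have h2 : ((4:ℝ))^j.val ≠ 0 := by positivity
    have h3 : ((4:ℝ))^(o+1) ≠ 0 := by positivity
    field_simp
  rw [hM, Matrix.det_mul, Matrix.det_mul, Matrix.det_smul, Matrix.det_diagonal]
  have hprod : ∏ i, e i ≠ 0 := by
    apply Finset.prod_ne_zero_iff.2
    intro i _
    simp only [he]
    positivity
  have hκ0 : κ ≠ 0 := by
    simp only [hκ]
    rcases Nat.even_or_odd o with h|h
    · rw [h.neg_one_pow]; positivity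
    · rw [h.neg_one_pow]; simp only [ne_eq, div_eq_zero_iff]; push_neg
      constructor; · norm_num
      · positivity
  exact mul_ne_zero (mul_ne_zero hprod (mul_ne_zero (pow_ne_zero _ hκ0) (det_Tb_ne_zero sz o))) hprod

noncomputable def Fp (k : ℕ) : Polynomial ℝ :=
  ∑ v ∈ Finset.range (k + 1),
    Polynomial.C ((sqrtCoeff v : ℝ) * (sqrtCoeff (k - v) : ℝ)) * Polynomial.X ^ v

lemma Fp_eval (k : ℕ) (t : ℝ) :
    (Fp k).eval t = ∑ v ∈ Finset.range (k + 1), (sqrtCoeff v : ℝ) * (sqrtCoeff (k - v) : ℝ) * t ^ v := by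
  simp [Fp, Polynomial.eval_finset_sum]

lemma Bpoly_eval_left (a b : ℝ) (hb : b ≠ 0) (k : ℕ) :
    (Bpoly a b k).eval a = (Fp k).eval (1 - a/b) := by
  rw [Fp_eval]
  unfold Bpoly
  rw [Polynomial.eval_finset_sum]
  rw [Finset.sum_eq_single 0]
  · rw [Polynomial.eval_finset_sum]
    apply Finset.sum_congr (by norm_num)
    intro v hv
    simp only [Polynomial.eval_mul, Polynomial.eval_pow, Polynomial.eval_C, Polynomial.eval_sub,
      Polynomial.eval_X, pow_zero, mul_one, one_mul]
    rw [sqrtCoeff_zero]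
    have : (1 : ℝ) - a/b = b⁻¹ * (b - a) := by field_simp
    rw [this, mul_pow]
    simp only [Nat.sub_zero]
    push_cast
    ring
  · intro u hu hu0
    rw [Polynomial.eval_finset_sum]
    apply Finset.sum_eq_zero
    intro v _
    simp only [Polynomial.eval_mul, Polynomial.eval_pow, Polynomial.eval_C, Polynomial.eval_sub,
      Polynomial.eval_X, sub_self]
    rw [zero_pow hu0]
    ring
  · intro h0; exact absurd (Finset.mem_range.2 (by omega)) h0

lemma Bpoly_eval_right (a b : ℝ) (ha : a ≠ 0) (k : ℕ) :
    (Bpoly a b k).eval b = (Fp k).eval (1 - b/a) := by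
  rw [Fp_eval]
  unfold Bpoly
  rw [Polynomial.eval_finset_sum]
  have hterm : ∀ u ∈ Finset.range (k+1),
      (∑ v ∈ Finset.range (k + 1 - u),
        Polynomial.C ((sqrtCoeff u : ℝ) * (sqrtCoeff v : ℝ) * (sqrtCoeff (k - u - v) : ℝ)
          * a⁻¹ ^ u * b⁻¹ ^ v) *
        (Polynomial.C a - Polynomial.X) ^ u * (Polynomial.C b - Polynomial.X) ^ v).eval b
      = (sqrtCoeff u : ℝ) * (sqrtCoeff (k - u) : ℝ) * (1 - b/a) ^ u := by
    intro u hu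
    rw [Polynomial.eval_finset_sum]
    rw [Finset.sum_eq_single 0]
    · simp only [Polynomial.eval_mul, Polynomial.eval_pow, Polynomial.eval_C, Polynomial.eval_sub,
        Polynomial.eval_X, pow_zero, mul_one]
      rw [sqrtCoeff_zero]
      have : (1 : ℝ) - b/a = a⁻¹ * (a - b) := by field_simp
      rw [this, mul_pow]
      simp only [Nat.sub_zero]
      push_cast
      ring
    · intro v _ hv0
      simp only [Polynomial.eval_mul, Polynomial.eval_pow, Polynomial.eval_C, Polynomial.eval_sub,
        Polynomial.eval_X, sub_self]
      rw [zero_pow hv0]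
      ring
    · intro h0
      exact absurd (Finset.mem_range.2 (by rw [Finset.mem_range] at hu; omega)) h0
  rw [Finset.sum_congr rfl hterm]

lemma Fp_eval_zero (k : ℕ) : (Fp k).eval 0 = (sqrtCoeff k : ℝ) := by
  rw [Fp_eval]
  rw [Finset.sum_eq_single 0]
  · simp [sqrtCoeff_zero]
  · intro v _ hv0; rw [zero_pow hv0]; ring
  · intro h0; exact absurd (Finset.mem_range.2 (by omega)) h0

noncomputable def Pcay (n : ℕ) : Polynomial ℝ :=
  if Odd n then
    Matrix.det (Matrix.of fun i j : Fin (n / 2) => Fp (i.val + j.val + 2))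
  else
    Matrix.det (Matrix.of fun i j : Fin (n / 2 - 1) => Fp (i.val + j.val + 3))


lemma cayley_eval (a b x t : ℝ) (n : ℕ)
    (h : ∀ k, (Bpoly a b k).eval x = (Fp k).eval t) :
    (cayleyPoly a b n).eval x = (Pcay n).eval t := by
  unfold cayleyPoly Pcay
  by_cases hodd : Odd n
  · rw [if_pos hodd, if_pos hodd]
    have e1 := RingHom.map_det (Polynomial.evalRingHom x)
      (Matrix.of fun i j : Fin (n/2) => Bpoly a b (i.val+j.val+2))
    have e2 := RingHom.map_det (Polynomial.evalRingHom t)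
      (Matrix.of fun i j : Fin (n/2) => Fp (i.val+j.val+2))
    simp only [Polynomial.coe_evalRingHom, RingHom.mapMatrix_apply] at e1 e2
    rw [e1, e2]
    congr 1
    ext i j
    simp [Matrix.map_apply, h]
  · rw [if_neg hodd, if_neg hodd]
    have e1 := RingHom.map_det (Polynomial.evalRingHom x)
      (Matrix.of fun i j : Fin (n/2-1) => Bpoly a b (i.val+j.val+3))
    have e2 := RingHom.map_det (Polynomial.evalRingHom t)
      (Matrix.of fun i j : Fin (n/2-1) => Fp (i.val+j.val+3))
    simp only [Polynomial.coe_evalRingHom, RingHom.mapMatrix_apply] at e1 e2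
    rw [e1, e2]
    congr 1
    ext i j
    simp [Matrix.map_apply, h]

lemma Pcay_ne_zero (n : ℕ) : Pcay n ≠ 0 := by
  intro h
  have h0 : (Pcay n).eval 0 = 0 := by rw [h]; simp
  unfold Pcay at h0
  by_cases hodd : Odd n
  · rw [if_pos hodd] at h0
    have e1 := RingHom.map_det (Polynomial.evalRingHom (0:ℝ))
      (Matrix.of fun i j : Fin (n/2) => Fp (i.val+j.val+2))
    simp only [Polynomial.coe_evalRingHom, RingHom.mapMatrix_apply] at e1
    rw [e1] at h0
    apply det_sqrtCoeff_ne_zero (n/2) 1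
    rw [← h0]
    congr 1
    ext i j
    simp only [Matrix.map_apply, Matrix.of_apply, Fp_eval_zero]
  · rw [if_neg hodd] at h0
    have e1 := RingHom.map_det (Polynomial.evalRingHom (0:ℝ))
      (Matrix.of fun i j : Fin (n/2-1) => Fp (i.val+j.val+3))
    simp only [Polynomial.coe_evalRingHom, RingHom.mapMatrix_apply] at e1
    rw [e1] at h0
    apply det_sqrtCoeff_ne_zero (n/2-1) 2
    rw [← h0]
    congr 1
    ext i j
    simp only [Matrix.map_apply, Matrix.of_apply, Fp_eval_zero]

/-- Proposition 2.23: for each `n ≥ 3` there is a finite set `R' ⊂ ℝ` such that whenever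
`a, b ≠ 0` and `a/b ∉ R'`, neither `a` nor `b` is a root of `𝓑_{a,b}^n`. -/
theorem cayleyPoly_a_b_not_roots_generic (n : ℕ) (hn : 3 ≤ n) :
    ∃ R' : Finset ℝ, ∀ a b : ℝ, a ≠ 0 → b ≠ 0 → a / b ∉ R' →
      (cayleyPoly a b n).eval a ≠ 0 ∧ (cayleyPoly a b n).eval b ≠ 0 := by
  set P := Pcay n with hP
  have hP0 : P ≠ 0 := Pcay_ne_zero n
  refine ⟨((P.roots.toFinset.image fun x => 1 - x) ∪
    (P.roots.toFinset.image fun x => (1-x)⁻¹)), ?_⟩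
  intro a b ha hb hR
  constructor
  · rw [cayley_eval a b a (1 - a/b) n (fun k => Bpoly_eval_left a b hb k)]
    intro hz
    apply hR
    apply Finset.mem_union_left
    apply Finset.mem_image.2
    refine ⟨1 - a/b, ?_, by ring⟩
    rw [Multiset.mem_toFinset]
    exact (Polynomial.mem_roots hP0).2 hz
  · rw [cayley_eval a b b (1 - b/a) n (fun k => Bpoly_eval_right a b ha k)]
    intro hz
    apply hR
    apply Finset.mem_union_right
    apply Finset.mem_image.2
    refine ⟨1 - b/a, ?_, ?_⟩
    · rw [Multiset.mem_toFinset]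
      exact (Polynomial.mem_roots hP0).2 hz
    · rw [show (1:ℝ) - (1 - b/a) = b/a by ring, inv_div]
end

section
/- For all nonzero real numbers a, b one has the polynomial identity −8a²b²·B₂^{a,b} = (a−b)²·X² + 2ab(a+b)·X − 3a²b² in ℝ[X]. Equivalently, since 𝓑_{a,b}^3 = B₂^{a,b}, the normalized Cayley determinant for triangular orbits is 𝓑̃_{a,b}^3 = (a−b)²X² + 2ab(a+b)X − 3a²b². -/
/-- The explicit formula for `n = 3`: `𝓑_{a,b}^3 = B₂^{a,b}` and the normalized Cayley
determinant is `𝓑̃_{a,b}^3 = −8a²b²·B₂^{a,b} = (a−b)²X² + 2ab(a+b)X − 3a²b²`. -/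
theorem cayleyPoly_three (a b : ℝ) (ha : a ≠ 0) (hb : b ≠ 0) :
    cayleyPoly a b 3 = Bpoly a b 2 ∧
    Polynomial.C (-8 * a ^ 2 * b ^ 2) * Bpoly a b 2 =
      Polynomial.C ((a - b) ^ 2) * Polynomial.X ^ 2 +
        Polynomial.C (2 * a * b * (a + b)) * Polynomial.X -
        Polynomial.C (3 * a ^ 2 * b ^ 2) := by
  have hc0 : sqrtCoeff 0 = 1 := by norm_num [sqrtCoeff]
  have hc1 : sqrtCoeff 1 = 1/2 := by norm_num [sqrtCoeff]
  have hc2 : sqrtCoeff 2 = -1/8 := by norm_num [sqrtCoeff, Nat.choose]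
  constructor
  · simp [cayleyPoly, (by decide : Odd 3), Matrix.det_fin_one]
  · apply Polynomial.funext
    intro x
    simp only [Bpoly, Finset.sum_range_succ, Finset.sum_range_zero, hc0, hc1, hc2]
    simp only [Polynomial.eval_mul, Polynomial.eval_add, Polynomial.eval_sub, Polynomial.eval_pow,
      Polynomial.eval_C, Polynomial.eval_X, Polynomial.eval_neg, Polynomial.eval_zero]
    field_simp
    ring
end

section
/- Let a, b ∈ ℝ with a > 0, b > 0 and a ≠ b, and set λ_± = −(ab/(a−b)²)·(a + b ± 2√(a² − ab + b²)). Then a² − ab + b² > 0; λ₊ and λ₋ are distinct real numbers and are exactly the two roots of the quadratic (a−b)²X² + 2ab(a+b)X − 3a²b²; and the inequalities a − λ₊ > a > a − λ₋ > 0 and b − λ₊ > b > b − λ₋ > 0 hold. (Hence the two confocal 3-caustics C_{λ±} of the ellipse C₀ : x²/a + y²/b = 1 are ellipses, with C_{λ₋} nested inside C₀ and C₀ nested inside C_{λ₊}.) -/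
/-- The ellipse case of Proposition 2.27: for `a, b > 0`, `a ≠ b`, the two roots
`λ± = −(ab/(a−b)²)(a + b ± 2√(a² − ab + b²))` of the normalized Cayley polynomial
`(a−b)²X² + 2ab(a+b)X − 3a²b²` are real and distinct, and satisfy
`a − λ₊ > a > a − λ₋ > 0` and `b − λ₊ > b > b − λ₋ > 0`, so the two confocal
3-caustics are ellipses, one nested inside `C₀` and the other containing it. -/
theorem three_caustics_of_ellipse (a b : ℝ) (ha : 0 < a) (hb : 0 < b) (hab : a ≠ b) :
    let lp : ℝ := -(a * b / (a - b) ^ 2) * (a + b + 2 * Real.sqrt (a ^ 2 - a * b + b ^ 2))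
    let lm : ℝ := -(a * b / (a - b) ^ 2) * (a + b - 2 * Real.sqrt (a ^ 2 - a * b + b ^ 2))
    0 < a ^ 2 - a * b + b ^ 2 ∧
    lp ≠ lm ∧
    (∀ x : ℝ, (a - b) ^ 2 * x ^ 2 + 2 * a * b * (a + b) * x - 3 * a ^ 2 * b ^ 2 = 0 ↔
      x = lp ∨ x = lm) ∧
    (a - lp > a ∧ a > a - lm ∧ a - lm > 0) ∧
    (b - lp > b ∧ b > b - lm ∧ b - lm > 0) := by
  intro lp lm
  have hab' : a - b ≠ 0 := sub_ne_zero.mpr hab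
  have hd : (0:ℝ) < (a - b) ^ 2 := by positivity
  have hd' : ((a - b) ^ 2 : ℝ) ≠ 0 := ne_of_gt hd
  have hq : (0:ℝ) < a ^ 2 - a * b + b ^ 2 := by nlinarith [sq_nonneg (a - b)]
  set s := Real.sqrt (a ^ 2 - a * b + b ^ 2) with hs
  have hs2 : s ^ 2 = a ^ 2 - a * b + b ^ 2 := Real.sq_sqrt hq.le
  have hs0 : 0 < s := Real.sqrt_pos.mpr hq
  have h2s : a + b < 2 * s := by nlinarith [sq_nonneg (a - b)]
  have hlm : lm = (a * b / (a - b) ^ 2) * (2 * s - (a + b)) := by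
    show -(a * b / (a - b) ^ 2) * (a + b - 2 * s) = _; ring
  have hlm0 : 0 < lm := by
    rw [hlm]; apply mul_pos (by positivity); linarith
  have hlp0 : lp < 0 := by
    show -(a * b / (a - b) ^ 2) * (a + b + 2 * s) < 0
    have : 0 < (a * b / (a - b) ^ 2) * (a + b + 2 * s) := by positivity
    linarith
  have habpos : 0 < a * b / (a - b) ^ 2 := by positivity
  -- key strict bounds
  have keya : 2 * a * s < 2 * a ^ 2 - a * b + b ^ 2 := by
    have hR : (0:ℝ) < 2 * a ^ 2 - a * b + b ^ 2 := by nlinarith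
    have hsq : (2 * a * s) ^ 2 < (2 * a ^ 2 - a * b + b ^ 2) ^ 2 := by
      have : (2 * a * s) ^ 2 = 4 * a ^ 2 * (a ^ 2 - a * b + b ^ 2) := by
        rw [mul_pow, mul_pow, hs2]; ring
      nlinarith [sq_nonneg (b * (a - b)), mul_pos hb hd]
    exact lt_of_pow_lt_pow_left₀ 2 hR.le hsq
  have keyb : 2 * b * s < 2 * b ^ 2 - a * b + a ^ 2 := by
    have hR : (0:ℝ) < 2 * b ^ 2 - a * b + a ^ 2 := by nlinarith
    have hsq : (2 * b * s) ^ 2 < (2 * b ^ 2 - a * b + a ^ 2) ^ 2 := by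
      have : (2 * b * s) ^ 2 = 4 * b ^ 2 * (a ^ 2 - a * b + b ^ 2) := by
        rw [mul_pow, mul_pow, hs2]; ring
      nlinarith [sq_nonneg (a * (a - b)), mul_pos ha hd]
    exact lt_of_pow_lt_pow_left₀ 2 hR.le hsq
  have hlmb : lm < b := by
    rw [hlm, div_mul_eq_mul_div, div_lt_iff₀ hd]
    nlinarith [mul_pos hb (sub_pos.mpr keya)]
  have hlma : lm < a := by
    rw [hlm, div_mul_eq_mul_div, div_lt_iff₀ hd]
    nlinarith [mul_pos ha (sub_pos.mpr keyb)]
  refine ⟨hq, ?_, ?_, ⟨by linarith, by linarith, by linarith⟩, ⟨by linarith, by linarith, by linarith⟩⟩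
  · intro h
    have : lp < lm := lt_trans hlp0 hlm0
    exact absurd h (ne_of_lt this)
  · intro x
    have hfac : (a - b) ^ 2 * x ^ 2 + 2 * a * b * (a + b) * x - 3 * a ^ 2 * b ^ 2
        = (a - b) ^ 2 * (x - lp) * (x - lm) := by
      show _ = (a - b) ^ 2 * (x - -(a * b / (a - b) ^ 2) * (a + b + 2 * s)) *
        (x - -(a * b / (a - b) ^ 2) * (a + b - 2 * s))
      field_simp
      linear_combination (4 * a ^ 2 * b ^ 2) * hs2
    rw [hfac]
    constructor
    · intro h
      rcases mul_eq_zero.mp h with h1 | h2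
      · rcases mul_eq_zero.mp h1 with h3 | h4
        · exact absurd h3 hd'
        · left; linarith [sub_eq_zero.mp h4]
      · right; linarith [sub_eq_zero.mp h2]
    · rintro (rfl | rfl) <;> ring
end

section
/- Let a, b ∈ ℝ with a > 0 > b (so a ≠ b), and set λ_± = −(ab/(a−b)²)·(a + b ± 2√(a² − ab + b²)). Then a² − ab + b² > 0; λ₊ and λ₋ are distinct real numbers and are exactly the two roots of the quadratic (a−b)²X² + 2ab(a+b)X − 3a²b²; and the inequalities a − λ₋ > a > a − λ₊ > 0 and 0 > b − λ₋ > b > b − λ₊ hold. (Hence the two confocal 3-caustics C_{λ±} of the hyperbola C₀ : x²/a + y²/b = 1 are hyperbolas.) -/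
/-- The hyperbola case of Proposition 2.27: for `a > 0 > b`, the two roots
`λ± = −(ab/(a−b)²)(a + b ± 2√(a² − ab + b²))` of the normalized Cayley polynomial
`(a−b)²X² + 2ab(a+b)X − 3a²b²` are real and distinct, and satisfy
`a − λ₋ > a > a − λ₊ > 0` and `0 > b − λ₋ > b > b − λ₊`, so the two confocal
3-caustics are hyperbolas. -/
theorem three_caustics_of_hyperbola (a b : ℝ) (ha : 0 < a) (hb : b < 0) :
    let lp : ℝ := -(a * b / (a - b) ^ 2) * (a + b + 2 * Real.sqrt (a ^ 2 - a * b + b ^ 2))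
    let lm : ℝ := -(a * b / (a - b) ^ 2) * (a + b - 2 * Real.sqrt (a ^ 2 - a * b + b ^ 2))
    0 < a ^ 2 - a * b + b ^ 2 ∧
    lp ≠ lm ∧
    (∀ x : ℝ, (a - b) ^ 2 * x ^ 2 + 2 * a * b * (a + b) * x - 3 * a ^ 2 * b ^ 2 = 0 ↔
      x = lp ∨ x = lm) ∧
    (a - lm > a ∧ a > a - lp ∧ a - lp > 0) ∧
    (0 > b - lm ∧ b - lm > b ∧ b > b - lp) := by
  intro lp lm
  have hab : a * b < 0 := mul_neg_of_pos_of_neg ha hb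
  have hpos : 0 < a ^ 2 - a * b + b ^ 2 := by nlinarith [sq_nonneg a, sq_nonneg b]
  set s := Real.sqrt (a ^ 2 - a * b + b ^ 2) with hsdef
  have hs2 : s ^ 2 = a ^ 2 - a * b + b ^ 2 := Real.sq_sqrt hpos.le
  have hs : 0 < s := Real.sqrt_pos.mpr hpos
  have hd : (0:ℝ) < (a - b) ^ 2 := pow_pos (by linarith) 2
  have hdn : (a - b) ^ 2 ≠ 0 := ne_of_gt hd
  have h1 : 0 < a + b + 2 * s := by nlinarith [sq_nonneg (a + b)]
  have h2 : a + b - 2 * s < 0 := by nlinarith [sq_nonneg (a + b)]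
  have hc : 0 < -(a * b / (a - b) ^ 2) := by
    rw [← neg_div]; exact div_pos (by linarith) hd
  have hlp : 0 < lp := mul_pos hc h1
  have hlm : lm < 0 := mul_neg_of_pos_of_neg hc h2
  have hlpa : lp < a := by
    rw [show lp = -(a * b) * (a + b + 2 * s) / (a - b) ^ 2 by ring, div_lt_iff₀ hd]
    have hp : 0 < a * (a ^ 2 - a * b + 2 * b ^ 2) + 2 * (-(a * b)) * s := by
      have : 0 < a * (a ^ 2 - a * b + 2 * b ^ 2) := by nlinarith [sq_nonneg b]
      nlinarith [mul_pos (mul_pos ha hs) (neg_pos.mpr hb)]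
    have hq : 0 < a ^ 2 * (a ^ 2 - a * b) ^ 2 := by
      have : 0 < a ^ 2 - a * b := by nlinarith
      positivity
    have hss : 4 * a ^ 2 * b ^ 2 * s ^ 2 = 4 * a ^ 2 * b ^ 2 * (a ^ 2 - a * b + b ^ 2) := by
      rw [hs2]
    nlinarith [hp, hq, hss]
  have key2 : 2 * a * s < 2 * a ^ 2 - a * b + b ^ 2 := by
    have hp2 : 0 < 2 * a * s + (2 * a ^ 2 - a * b + b ^ 2) := by
      nlinarith [mul_pos ha hs, sq_nonneg b]
    have hq2 : 0 < b ^ 2 * (a - b) ^ 2 := mul_pos (pow_two_pos_of_ne_zero (ne_of_lt hb)) hd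
    have hss2 : 4 * a ^ 2 * s ^ 2 = 4 * a ^ 2 * (a ^ 2 - a * b + b ^ 2) := by rw [hs2]
    nlinarith [hp2, hq2, hss2]
  have hlmb : b < lm := by
    rw [show lm = -(a * b) * (a + b - 2 * s) / (a - b) ^ 2 by ring, lt_div_iff₀ hd]
    nlinarith [mul_lt_mul_of_neg_left key2 hb]
  refine ⟨hpos, by nlinarith, ?_, ⟨by linarith, by linarith, by linarith⟩,
    ⟨by linarith, by linarith, by linarith⟩⟩
  intro x
  have key : (a - b) ^ 2 * x ^ 2 + 2 * a * b * (a + b) * x - 3 * a ^ 2 * b ^ 2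
      = (a - b) ^ 2 * ((x - lp) * (x - lm)) := by
    show _ = (a - b) ^ 2 * ((x - -(a * b / (a - b) ^ 2) * (a + b + 2 * s)) *
      (x - -(a * b / (a - b) ^ 2) * (a + b - 2 * s)))
    have hc' : a * b / (a - b) ^ 2 * (a - b) ^ 2 = a * b := div_mul_cancel₀ _ hdn
    linear_combination (-(2 * (a + b) * x - 3 * (a * b + a * b / (a - b) ^ 2 * (a - b) ^ 2))) * hc' + 4 * (a * b / (a - b) ^ 2) ^ 2 * (a - b) ^ 2 * hs2
  rw [key, mul_eq_zero, mul_eq_zero, sub_eq_zero, sub_eq_zero]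
  simp [hdn]
end

section
/- Let a, b ∈ ℝ with ab ≠ 0, a ≠ b and a ≠ −b, and set λ₁ = ab/(b−a), λ₂ = ab/(a+b), λ₃ = ab/(a−b). Then λ₁, λ₂, λ₃ are pairwise distinct and each is a root of the cubic polynomial (a+b)(a−b)²X³ − ab(a−b)²X² − (ab)²(a+b)X + (ab)³ (whose leading coefficient (a+b)(a−b)² is nonzero, so these are all its roots). If moreover a > b > 0, then: a − λ₁ > a > a − λ₂ > 0 and b − λ₁ > b > b − λ₂ > 0; b − λ₃ < 0; and a − λ₃ > 0 if a > 2b, a − λ₃ = 0 if a = 2b, a − λ₃ < 0 if a < 2b. -/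
/-- The algebraic content of Proposition 2.28 (4-caustics): for `ab ≠ 0`, `a ≠ b`,
`a ≠ −b`, the numbers `λ₁ = ab/(b−a)`, `λ₂ = ab/(a+b)`, `λ₃ = ab/(a−b)` are pairwise
distinct roots of the cubic `(a+b)(a−b)²X³ − ab(a−b)²X² − (ab)²(a+b)X + (ab)³`, whose
leading coefficient is nonzero; and when `a > b > 0` the stated sign inequalities hold. -/
theorem four_caustics_roots (a b : ℝ) (hab : a * b ≠ 0) (h1 : a ≠ b) (h2 : a ≠ -b) :
    let l1 : ℝ := a * b / (b - a)
    let l2 : ℝ := a * b / (a + b)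
    let l3 : ℝ := a * b / (a - b)
    let P : ℝ → ℝ := fun x => (a + b) * (a - b) ^ 2 * x ^ 3 - a * b * (a - b) ^ 2 * x ^ 2
      - (a * b) ^ 2 * (a + b) * x + (a * b) ^ 3
    (l1 ≠ l2 ∧ l1 ≠ l3 ∧ l2 ≠ l3) ∧
    (a + b) * (a - b) ^ 2 ≠ 0 ∧
    (P l1 = 0 ∧ P l2 = 0 ∧ P l3 = 0) ∧
    (a > b → b > 0 →
      ((a - l1 > a ∧ a > a - l2 ∧ a - l2 > 0) ∧
       (b - l1 > b ∧ b > b - l2 ∧ b - l2 > 0) ∧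
       b - l3 < 0 ∧
       (a > 2 * b → a - l3 > 0) ∧ (a = 2 * b → a - l3 = 0) ∧ (a < 2 * b → a - l3 < 0))) := by
  intro l1 l2 l3 P
  have ha : a ≠ 0 := fun h => hab (by simp [h])
  have hb : b ≠ 0 := fun h => hab (by simp [h])
  have hba : b - a ≠ 0 := fun h => h1 (by linarith [sub_eq_zero.mp h])
  have hab' : a - b ≠ 0 := fun h => h1 (sub_eq_zero.mp h)
  have hpb : a + b ≠ 0 := fun h => h2 (by linarith)
  constructor
  · refine ⟨?_, ?_, ?_⟩
    · intro h
      have := div_eq_div_iff hba hpb |>.mp h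
      have : a * b * (2 * a) = 0 := by nlinarith
      rcases mul_eq_zero.mp this with h' | h'
      exacts [hab h', ha (by linarith)]
    · intro h
      have := div_eq_div_iff hba hab' |>.mp h
      have : a * b * (2 * (a - b)) = 0 := by nlinarith
      rcases mul_eq_zero.mp this with h' | h'
      exacts [hab h', hab' (by linarith)]
    · intro h
      have := div_eq_div_iff hpb hab' |>.mp h
      have : a * b * (2 * b) = 0 := by nlinarith
      rcases mul_eq_zero.mp this with h' | h'
      exacts [hab h', hb (by linarith)]
  refine ⟨mul_ne_zero hpb (pow_ne_zero 2 hab'), ⟨?_, ?_, ?_⟩, ?_⟩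
  · show (a + b) * (a - b) ^ 2 * (a * b / (b - a)) ^ 3 - a * b * (a - b) ^ 2 * (a * b / (b - a)) ^ 2
      - (a * b) ^ 2 * (a + b) * (a * b / (b - a)) + (a * b) ^ 3 = 0
    field_simp
    ring
  · show (a + b) * (a - b) ^ 2 * (a * b / (a + b)) ^ 3 - a * b * (a - b) ^ 2 * (a * b / (a + b)) ^ 2
      - (a * b) ^ 2 * (a + b) * (a * b / (a + b)) + (a * b) ^ 3 = 0
    field_simp
    ring
  · show (a + b) * (a - b) ^ 2 * (a * b / (a - b)) ^ 3 - a * b * (a - b) ^ 2 * (a * b / (a - b)) ^ 2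
      - (a * b) ^ 2 * (a + b) * (a * b / (a - b)) + (a * b) ^ 3 = 0
    field_simp
    ring
  · intro hba' hb0
    have ha0 : 0 < a := by linarith
    have habp : 0 < a * b := mul_pos ha0 hb0
    have hbaneg : b - a < 0 := by linarith
    have hl1 : l1 < 0 := div_neg_of_pos_of_neg habp hbaneg
    have hl2 : 0 < l2 := div_pos habp (by linarith)
    have hl2a : l2 < a := by
      rw [div_lt_iff₀ (by linarith : (0:ℝ) < a + b)]
      nlinarith
    have hl2b : l2 < b := by
      rw [div_lt_iff₀ (by linarith : (0:ℝ) < a + b)]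
      nlinarith
    have habd : 0 < a - b := by linarith
    have hl3b : b < l3 := by
      rw [lt_div_iff₀ habd]; nlinarith
    refine ⟨⟨by linarith, by linarith, by linarith⟩, ⟨by linarith, by linarith, by linarith⟩,
      by linarith, ?_, ?_, ?_⟩
    · intro h
      have : l3 < a := by rw [div_lt_iff₀ habd]; nlinarith
      linarith
    · intro h
      have : l3 = a := by rw [div_eq_iff hab']; nlinarith
      linarith
    · intro h
      have : a < l3 := by rw [lt_div_iff₀ habd]; nlinarith
      linarith
end

section
/- Let a, b ∈ ℂ be nonzero and define the symmetric bilinear form Φ((x,y),(x',y')) = xx'/a + yy'/b on ℂ². Let p₀, p₁ ∈ ℂ² with Φ(p₀,p₀) = 1, Φ(p₁,p₁) = 1 and p₀ ≠ p₁, and let v₀, v₁ ∈ ℂ² with Φ₀(v₀) := v₀·v₀ = 1 and v₁·v₁ = 1 (dot product of the complexified Euclidean form x² + y²). Assume p₁ − p₀ = t·v₀ for some t ∈ ℂ, and that Φ(v₀ + v₁, p₁) = 0 or Φ(v₀ − v₁, p₁) = 0 (the complex billiard reflection condition at p₁). Then Φ(v₀, p₀)² = Φ(v₁, p₁)². -/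
/-- Invariance of the complex Joachimsthal quantity under one billiard reflection
(the finite-vertex case of Proposition 2.29). Here `Φ(p,q) = p₁q₁/a + p₂q₂/b` is the
bilinear form of the complexified conic `C : x²/a + y²/b = 1`, `p₀, p₁ ∈ C`, `v₀` is a
unit direction (for the complexified Euclidean form `x² + y²`) of the chord `p₀p₁`,
`v₁` is a unit direction of the next chord, and the reflection condition at `p₁` is
`Φ(v₀ + v₁, p₁) = 0` or `Φ(v₀ − v₁, p₁) = 0`. Then `Φ(v₀,p₀)² = Φ(v₁,p₁)²`. -/
theorem complex_joachimsthal_invariant (a b : ℂ) (ha : a ≠ 0) (hb : b ≠ 0)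
    (p₀ p₁ v₀ v₁ : ℂ × ℂ)
    (hp₀ : p₀.1 * p₀.1 / a + p₀.2 * p₀.2 / b = 1)
    (hp₁ : p₁.1 * p₁.1 / a + p₁.2 * p₁.2 / b = 1)
    (hne : p₀ ≠ p₁)
    (hv₀ : v₀.1 * v₀.1 + v₀.2 * v₀.2 = 1)
    (hv₁ : v₁.1 * v₁.1 + v₁.2 * v₁.2 = 1)
    (hchord : ∃ t : ℂ, p₁ - p₀ = t • v₀)
    (hrefl : (v₀.1 + v₁.1) * p₁.1 / a + (v₀.2 + v₁.2) * p₁.2 / b = 0 ∨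
             (v₀.1 - v₁.1) * p₁.1 / a + (v₀.2 - v₁.2) * p₁.2 / b = 0) :
    (v₀.1 * p₀.1 / a + v₀.2 * p₀.2 / b) ^ 2 = (v₁.1 * p₁.1 / a + v₁.2 * p₁.2 / b) ^ 2 := by
  obtain ⟨t, ht⟩ := hchord
  have h1 : p₁.1 = p₀.1 + t * v₀.1 := by
    have := congrArg Prod.fst ht
    simp [Prod.fst_sub] at this
    linear_combination this
  have h2 : p₁.2 = p₀.2 + t * v₀.2 := by
    have := congrArg Prod.snd ht
    simp [Prod.snd_sub] at this
    linear_combination this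
  have ht0 : t ≠ 0 := by
    intro h0
    apply hne
    have : p₁ - p₀ = 0 := by rw [ht, h0, zero_smul]
    exact (sub_eq_zero.mp this).symm
  have hkey : t * ((v₀.1 * p₁.1 / a + v₀.2 * p₁.2 / b) +
      (v₀.1 * p₀.1 / a + v₀.2 * p₀.2 / b)) = 0 := by
    rw [h1, h2] at hp₁ ⊢
    linear_combination hp₁ - hp₀
  have hK : (v₀.1 * p₁.1 / a + v₀.2 * p₁.2 / b) +
      (v₀.1 * p₀.1 / a + v₀.2 * p₀.2 / b) = 0 :=
    (mul_eq_zero.mp hkey).resolve_left ht0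
  rcases hrefl with hr | hr
  · linear_combination ((v₀.1 * p₀.1 / a + v₀.2 * p₀.2 / b) -
      (v₀.1 * p₁.1 / a + v₀.2 * p₁.2 / b)) * hK +
      ((v₀.1 * p₁.1 / a + v₀.2 * p₁.2 / b) -
      (v₁.1 * p₁.1 / a + v₁.2 * p₁.2 / b)) * hr
  · linear_combination ((v₀.1 * p₀.1 / a + v₀.2 * p₀.2 / b) -
      (v₀.1 * p₁.1 / a + v₀.2 * p₁.2 / b)) * hK +
      ((v₀.1 * p₁.1 / a + v₀.2 * p₁.2 / b) +
      (v₁.1 * p₁.1 / a + v₁.2 * p₁.2 / b)) * hr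
end

section
/- Let a, b ∈ ℂ be nonzero, λ ∈ ℂ, (x₀, y₀) ∈ ℂ² with x₀²/a + y₀²/b = 1, and (v_x, v_y) ∈ ℂ². Then (a−λ)·v_y² + (b−λ)·v_x² − (v_x y₀ − v_y x₀)² = −(v_x² + v_y²)·λ + ab·(x₀v_x/a + y₀v_y/b)². In particular, if v_x² + v_y² ≠ 0 and (a−λ)v_y² + (b−λ)v_x² − (v_x y₀ − v_y x₀)² = 0, then λ = ab·(x₀v_x/a + y₀v_y/b)²/(v_x² + v_y²). -/
/-- Computational content of Proposition 2.32: for a point `(x₀,y₀)` on the complexified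
conic `x²/a + y²/b = 1` and a direction `(vx,vy)`, one has the identity
`(a−λ)vy² + (b−λ)vx² − (vx·y₀ − vy·x₀)² = −(vx²+vy²)·λ + ab·(x₀vx/a + y₀vy/b)²`;
hence if `vx²+vy² ≠ 0` and the left side vanishes (tangency to the confocal conic `C_λ`),
then `λ = ab·P` where `P` is the complex Joachimsthal invariant. -/
theorem joachimsthal_caustic_identity (a b : ℂ) (ha : a ≠ 0) (hb : b ≠ 0)
    (lam x₀ y₀ vx vy : ℂ) (hp : x₀ ^ 2 / a + y₀ ^ 2 / b = 1) :
    (a - lam) * vy ^ 2 + (b - lam) * vx ^ 2 - (vx * y₀ - vy * x₀) ^ 2 =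
      -(vx ^ 2 + vy ^ 2) * lam + a * b * (x₀ * vx / a + y₀ * vy / b) ^ 2 ∧
    (vx ^ 2 + vy ^ 2 ≠ 0 →
      (a - lam) * vy ^ 2 + (b - lam) * vx ^ 2 - (vx * y₀ - vy * x₀) ^ 2 = 0 →
      lam = a * b * (x₀ * vx / a + y₀ * vy / b) ^ 2 / (vx ^ 2 + vy ^ 2)) := by
  have key : (a - lam) * vy ^ 2 + (b - lam) * vx ^ 2 - (vx * y₀ - vy * x₀) ^ 2 =
      -(vx ^ 2 + vy ^ 2) * lam + a * b * (x₀ * vx / a + y₀ * vy / b) ^ 2 := by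
    field_simp at hp ⊢
    ring_nf
    linear_combination -(a * vy ^ 2 + b * vx ^ 2) * hp
  refine ⟨key, fun hv h0 => ?_⟩
  rw [key] at h0
  rw [eq_div_iff hv]
  linear_combination -h0
end

section
/- Let E be a finite-dimensional real inner product space, let M : E →ₗ[ℝ] E be a linear endomorphism, and let w, ξ ∈ E. Assume that for every β ∈ ℝ such that ker(M − β·id) ≠ {0}, the vector w does not belong to the range of M − β·id. Define the linear map f : E →ₗ[ℝ] E by f(x) = M(x) + ⟨ξ, x⟩·w. Then for every α ∈ ℝ, either the eigenspace ker(f − α·id) has dimension at most 1, or every x ∈ ker(f − α·id) satisfies ⟨ξ, x⟩ = 0. -/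
/-- Lemma 2.47: let `E` be a finite-dimensional real inner product space, `M` a linear
endomorphism of `E` and `w, ξ ∈ E`. If for every real eigenvalue `β` of `M` the vector `w`
is not in the range of `M − β·id`, then for the map `f : x ↦ Mx + ⟨ξ,x⟩·w` every
eigenspace is either of dimension at most 1 or consists of vectors orthogonal to `ξ`. -/
theorem eigenspaces_of_rank_one_perturbation
    {E : Type*} [NormedAddCommGroup E] [InnerProductSpace ℝ E] [FiniteDimensional ℝ E]
    (M : E →ₗ[ℝ] E) (w ξ : E)
    (hw : ∀ β : ℝ, LinearMap.ker (M - β • (LinearMap.id : E →ₗ[ℝ] E)) ≠ ⊥ →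
      w ∉ LinearMap.range (M - β • (LinearMap.id : E →ₗ[ℝ] E)))
    (f : E →ₗ[ℝ] E) (hf : ∀ x : E, f x = M x + (inner ℝ ξ x : ℝ) • w) :
    ∀ α : ℝ,
      Module.finrank ℝ (LinearMap.ker (f - α • (LinearMap.id : E →ₗ[ℝ] E))) ≤ 1 ∨
      ∀ x ∈ LinearMap.ker (f - α • (LinearMap.id : E →ₗ[ℝ] E)), (inner ℝ ξ x : ℝ) = 0 := by
  intro α
  set K := LinearMap.ker (f - α • (LinearMap.id : E →ₗ[ℝ] E)) with hK
  by_contra hcon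
  push_neg at hcon
  obtain ⟨hdim, x, hxK, hxξ⟩ := hcon
  -- membership in K means M x + ⟨ξ,x⟩ w = α x
  have hmem : ∀ y ∈ K, (M - α • (LinearMap.id : E →ₗ[ℝ] E)) y = -((inner ℝ ξ y : ℝ) • w) := by
    intro y hy
    have h0 : f y - α • y = 0 := by
      simpa [hK, LinearMap.sub_apply, LinearMap.smul_apply] using hy
    have := hf y
    simp only [LinearMap.sub_apply, LinearMap.smul_apply, LinearMap.id_apply]
    rw [this] at h0
    linear_combination (norm := abel) h0
  -- w is in the range of M - α id
  have hwrange : w ∈ LinearMap.range (M - α • (LinearMap.id : E →ₗ[ℝ] E)) := by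
    refine ⟨(-(inner ℝ ξ x : ℝ)⁻¹) • x, ?_⟩
    rw [map_smul, hmem x hxK]
    rw [smul_neg, smul_smul]
    field_simp
    simp
  -- the restriction of ⟨ξ,·⟩ to K has nontrivial kernel
  have hg : ∃ z : K, z ≠ 0 ∧ (inner ℝ ξ (z : E) : ℝ) = 0 := by
    set g : K →ₗ[ℝ] ℝ := (innerSL ℝ ξ).toLinearMap.comp K.subtype with hgdef
    have hrk := LinearMap.finrank_range_add_finrank_ker g
    have hr1 : Module.finrank ℝ (LinearMap.range g) ≤ 1 := by
      simpa using Submodule.finrank_le (LinearMap.range g)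
    have hker : 0 < Module.finrank ℝ (LinearMap.ker g) := by omega
    have hne : LinearMap.ker g ≠ ⊥ := by
      intro hbot
      rw [hbot, finrank_bot] at hker
      exact lt_irrefl 0 hker
    obtain ⟨z, hz0, hzne⟩ := Submodule.exists_mem_ne_zero_of_ne_bot hne
    refine ⟨z, hzne, ?_⟩
    simpa [hgdef] using hz0
  obtain ⟨z, hzne, hzξ⟩ := hg
  have hzker : (z : E) ∈ LinearMap.ker (M - α • (LinearMap.id : E →ₗ[ℝ] E)) := by
    rw [LinearMap.mem_ker, hmem (z : E) z.2, hzξ]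
    simp
  have hne : LinearMap.ker (M - α • (LinearMap.id : E →ₗ[ℝ] E)) ≠ ⊥ := by
    intro hbot
    rw [hbot, Submodule.mem_bot] at hzker
    exact hzne (Subtype.ext hzker)
  exact hw α hne hwrange
end

section
/- Let n, k be positive integers, V ⊆ ℝⁿ a Lebesgue measurable set, and p ∈ ℝⁿ a Lebesgue density point of V. Let f, g : ℝⁿ → ℝᵏ be maps that are (Fréchet) differentiable at p and satisfy f(x) = g(x) for all x ∈ V. Then f(p) = g(p) and the derivatives of f and g at p coincide: Df(p) = Dg(p); i.e. the 1-jets of f and g at p coincide. -/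
open MeasureTheory Metric Filter
open scoped ENNReal

/-- Near a density point `p` of `V`, for every direction `v` and every `ε > 0`,
the ball of radius `ε*t` around `p + t • v` meets `V` for all small `t > 0`. -/
lemma aux_density_nonempty {n : ℕ} (hn : 0 < n)
    (V : Set (EuclideanSpace ℝ (Fin n)))
    (p : EuclideanSpace ℝ (Fin n))
    (hdensity : Filter.Tendsto
      (fun r : ℝ => volume (V ∩ Metric.ball p r) / volume (Metric.ball p r))
      (nhdsWithin 0 (Set.Ioi 0)) (nhds 1))
    (v : EuclideanSpace ℝ (Fin n)) {ε : ℝ} (hε : 0 < ε) :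
    ∀ᶠ t in nhdsWithin 0 (Set.Ioi 0),
      (V ∩ Metric.ball (p + t • v) (ε * t)).Nonempty := by
  haveI : Nonempty (Fin n) := ⟨⟨0, hn⟩⟩
  by_contra hcon
  rw [Filter.not_eventually] at hcon
  set R : ℝ := ‖v‖ + ε with hR
  have hRpos : 0 < R := by positivity
  set c₀ : ℝ≥0∞ := volume (Metric.ball (0 : EuclideanSpace ℝ (Fin n)) 1) with hc₀
  have hc₀pos : 0 < c₀ := measure_ball_pos _ _ one_pos
  have hc₀top : c₀ < ⊤ := measure_ball_lt_top
  set δ : ℝ≥0∞ := ENNReal.ofReal ((ε / R) ^ n) with hδ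
  have hδpos : 0 < δ := by
    rw [hδ]
    apply ENNReal.ofReal_pos.2
    positivity
  -- the claimed density bound at the frequent bad times
  have key : ∀ t : ℝ, 0 < t → (V ∩ Metric.ball (p + t • v) (ε * t)) = ∅ →
      volume (V ∩ Metric.ball p (R * t)) / volume (Metric.ball p (R * t)) ≤ 1 - δ := by
    intro t ht hempty
    have hsub : Metric.ball (p + t • v) (ε * t) ⊆ Metric.ball p (R * t) := by
      intro x hx
      rw [Metric.mem_ball] at hx ⊢
      calc dist x p ≤ dist x (p + t • v) + dist (p + t • v) p := dist_triangle _ _ _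
        _ < ε * t + ‖t • v‖ := by
            apply add_lt_add_of_lt_of_le hx
            rw [dist_eq_norm]
            simp [add_sub_cancel_left]
        _ ≤ ε * t + t * ‖v‖ := by
            rw [norm_smul, Real.norm_eq_abs, abs_of_pos ht]
        _ = R * t := by ring
    set b : ℝ≥0∞ := volume (Metric.ball p (R * t)) with hb
    set s : ℝ≥0∞ := volume (Metric.ball (p + t • v) (ε * t)) with hs
    have hbpos : 0 < b := measure_ball_pos _ _ (by positivity)
    have hbtop : b ≠ ⊤ := measure_ball_lt_top.ne
    have hstop : s ≠ ⊤ := measure_ball_lt_top.ne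
    have hsb : s ≤ b := measure_mono hsub
    -- s = δ * b
    have hbval : b = ENNReal.ofReal ((R * t) ^ n) * c₀ := by
      rw [hb, Measure.addHaar_ball _ _ (by positivity : (0:ℝ) ≤ R * t),
        finrank_euclideanSpace_fin]
    have hsval : s = ENNReal.ofReal ((ε * t) ^ n) * c₀ := by
      rw [hs, Measure.addHaar_ball _ _ (by positivity : (0:ℝ) ≤ ε * t),
        finrank_euclideanSpace_fin]
    have hreal : (ε * t) ^ n = (ε / R) ^ n * (R * t) ^ n := by
      rw [← mul_pow]
      congr 1
      field_simp
    -- V ∩ big ball misses the small ball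
    have hVsub : V ∩ Metric.ball p (R * t) ⊆
        Metric.ball p (R * t) \ Metric.ball (p + t • v) (ε * t) := by
      intro x hx
      refine ⟨hx.2, fun hxs => ?_⟩
      exact Set.eq_empty_iff_forall_notMem.1 hempty x ⟨hx.1, hxs⟩
    have hmeas : volume (V ∩ Metric.ball p (R * t)) ≤ b - s := by
      calc volume (V ∩ Metric.ball p (R * t))
          ≤ volume (Metric.ball p (R * t) \ Metric.ball (p + t • v) (ε * t)) :=
            measure_mono hVsub
        _ = b - s := measure_diff hsub measurableSet_ball.nullMeasurableSet hstop
    calc volume (V ∩ Metric.ball p (R * t)) / b ≤ (b - s) / b :=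
          ENNReal.div_le_div_right hmeas _
      _ = b / b - s / b := ENNReal.sub_div (fun _ _ => hbpos.ne')
      _ = 1 - δ := by
          rw [ENNReal.div_self hbpos.ne' hbtop, hsval, hbval, hreal, hδ,
            ENNReal.ofReal_mul (by positivity), mul_assoc, ← hbval, mul_comm,
            mul_div_assoc, ENNReal.mul_div_cancel hbpos.ne' hbtop]
  -- transfer the density limit along t ↦ R * t
  have hmap : Filter.Tendsto (fun t : ℝ => R * t) (nhdsWithin 0 (Set.Ioi 0))
      (nhdsWithin 0 (Set.Ioi 0)) := by
    apply tendsto_nhdsWithin_of_tendsto_nhds_of_eventually_within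
    · have h1 : Filter.Tendsto (fun t : ℝ => R * t) (nhds 0) (nhds (R * 0)) :=
        (continuous_const.mul continuous_id).tendsto 0
      rw [mul_zero] at h1
      exact h1.mono_left nhdsWithin_le_nhds
    · filter_upwards [self_mem_nhdsWithin] with t ht
      exact mul_pos hRpos ht
  have hdens' : Filter.Tendsto
      (fun t : ℝ => volume (V ∩ Metric.ball p (R * t)) / volume (Metric.ball p (R * t)))
      (nhdsWithin 0 (Set.Ioi 0)) (nhds 1) := hdensity.comp hmap
  have hlt : (1 : ℝ≥0∞) - δ < 1 := ENNReal.sub_lt_self ENNReal.one_ne_top one_ne_zero hδpos.ne'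
  have hev : ∀ᶠ t in nhdsWithin (0:ℝ) (Set.Ioi 0),
      1 - δ < volume (V ∩ Metric.ball p (R * t)) / volume (Metric.ball p (R * t)) :=
    hdens'.eventually (eventually_gt_nhds hlt)
  have hfreq : ∃ᶠ t in nhdsWithin (0:ℝ) (Set.Ioi 0),
      volume (V ∩ Metric.ball p (R * t)) / volume (Metric.ball p (R * t)) ≤ 1 - δ := by
    apply (hcon.and_eventually self_mem_nhdsWithin).mono
    rintro t ⟨hne, ht⟩
    exact key t ht (Set.not_nonempty_iff_eq_empty.1 hne)
  rcases (hfreq.and_eventually hev).exists with ⟨t, h1, h2⟩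
  exact absurd h2 (not_lt.2 h1)

/-- Every vector is in the tangent cone to `V` at a density point `p`. -/
lemma aux_tangentCone {n : ℕ} (hn : 0 < n)
    (V : Set (EuclideanSpace ℝ (Fin n)))
    (p : EuclideanSpace ℝ (Fin n))
    (hdensity : Filter.Tendsto
      (fun r : ℝ => volume (V ∩ Metric.ball p r) / volume (Metric.ball p r))
      (nhdsWithin 0 (Set.Ioi 0)) (nhds 1))
    (v : EuclideanSpace ℝ (Fin n)) :
    v ∈ tangentConeAt ℝ V p := by
  -- choose, for each j, a small t and x ∈ V close to p + t v
  have hchoice : ∀ j : ℕ, ∃ t : ℝ, 0 < t ∧ t < 1 / (j + 1) ∧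
      ∃ x, x ∈ V ∧ x ∈ Metric.ball (p + t • v) ((1 / (j + 1)) * t) := by
    intro j
    have hε : (0:ℝ) < 1 / (j + 1) := by positivity
    have h1 := aux_density_nonempty hn V p hdensity v hε
    have h2 : ∀ᶠ t in nhdsWithin (0:ℝ) (Set.Ioi 0), t < 1 / ((j:ℝ) + 1) := by
      apply eventually_nhdsWithin_of_eventually_nhds
      exact Filter.Tendsto.eventually_lt_const hε tendsto_id
    have h3 : ∀ᶠ t in nhdsWithin (0:ℝ) (Set.Ioi 0), 0 < t := self_mem_nhdsWithin
    rcases (h1.and (h2.and h3)).exists with ⟨t, ⟨x, hxV, hxb⟩, htlt, htpos⟩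
    exact ⟨t, htpos, htlt, x, hxV, hxb⟩
  choose t htpos htlt x hxV hxb using hchoice
  refine mem_tangentConeAt_iff_exists_seq_norm_tendsto_atTop.2
    ⟨fun j => (t j)⁻¹, fun j => x j - p, ?_, ?_, ?_⟩
  swap
  · filter_upwards with j
    simpa using hxV j
  · have : Filter.Tendsto (fun j : ℕ => ((j:ℝ) + 1)) atTop atTop :=
      tendsto_atTop_add_const_right _ _ tendsto_natCast_atTop_atTop
    apply tendsto_atTop_mono _ this
    intro j
    have h1 : (j:ℝ) + 1 ≤ (t j)⁻¹ := by
      rw [le_inv_comm₀ (by positivity) (htpos j)]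
      have := (htlt j).le
      rwa [one_div] at this
    calc (j:ℝ) + 1 ≤ (t j)⁻¹ := h1
      _ ≤ ‖(t j)⁻¹‖ := le_abs_self _
  · rw [tendsto_iff_norm_sub_tendsto_zero]
    apply squeeze_zero (fun j => norm_nonneg _) (g := fun j : ℕ => 1 / ((j:ℝ) + 1))
    · intro j
      have h0 : (0:ℝ) < t j := htpos j
      have hb := hxb j
      rw [Metric.mem_ball, dist_eq_norm] at hb
      have : ‖(t j)⁻¹ • (x j - p) - v‖ = ‖x j - (p + t j • v)‖ / t j := by
        rw [show (t j)⁻¹ • (x j - p) - v = (t j)⁻¹ • (x j - (p + t j • v)) by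
          rw [smul_sub, smul_sub, smul_add, smul_smul, inv_mul_cancel₀ h0.ne', one_smul]; abel]
        rw [norm_smul, norm_inv, Real.norm_eq_abs, abs_of_pos h0, div_eq_inv_mul]
      rw [this]
      calc ‖x j - (p + t j • v)‖ / t j ≤ ((1 / ((j:ℝ) + 1)) * t j) / t j := by
            gcongr
        _ = 1 / ((j:ℝ) + 1) := by
            rw [mul_div_assoc, div_self h0.ne', mul_one]
    · exact tendsto_one_div_add_atTop_nhds_zero_nat

/-- Lemma 3.27: if `f, g : ℝⁿ → ℝᵏ` are differentiable at a Lebesgue density point `p`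
of a measurable set `V` and coincide on `V`, then their 1-jets at `p` coincide:
`f(p) = g(p)` and `Df(p) = Dg(p)`. -/
theorem one_jets_coincide_at_density_point
    (n k : ℕ) (hn : 0 < n) (hk : 0 < k)
    (V : Set (EuclideanSpace ℝ (Fin n))) (hV : MeasurableSet V)
    (p : EuclideanSpace ℝ (Fin n))
    (hdensity : Filter.Tendsto
      (fun r : ℝ => volume (V ∩ Metric.ball p r) / volume (Metric.ball p r))
      (nhdsWithin 0 (Set.Ioi 0)) (nhds 1))
    (f g : EuclideanSpace ℝ (Fin n) → EuclideanSpace ℝ (Fin k))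
    (f' g' : EuclideanSpace ℝ (Fin n) →L[ℝ] EuclideanSpace ℝ (Fin k))
    (hf : HasFDerivAt f f' p) (hg : HasFDerivAt g g' p)
    (heq : ∀ x ∈ V, f x = g x) :
    f p = g p ∧ f' = g' := by
  -- p is in the closure of V
  have hclos : p ∈ closure V := by
    have h := (aux_density_nonempty hn V p hdensity 0 one_pos)
    rw [mem_closure_iff_nhds]
    intro U hU
    rcases Metric.mem_nhds_iff.1 hU with ⟨r, hr, hrU⟩
    have h2 : ∀ᶠ s in nhdsWithin (0:ℝ) (Set.Ioi 0), s < r := by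
      apply eventually_nhdsWithin_of_eventually_nhds
      exact Filter.Tendsto.eventually_lt_const hr tendsto_id
    rcases (h.and h2).exists with ⟨s, ⟨y, hyV, hyb⟩, hsr⟩
    refine ⟨y, hrU ?_, hyV⟩
    simp only [smul_zero, add_zero, one_mul] at hyb
    exact Metric.ball_subset_ball hsr.le hyb
  have hUD : UniqueDiffWithinAt ℝ V p := by
    constructor
    · have : tangentConeAt ℝ V p = Set.univ :=
        Set.eq_univ_of_forall (aux_tangentCone hn V p hdensity)
      rw [this, Submodule.span_univ]
      exact dense_univ.mono (by simp)
    · exact hclos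
  have hne : (nhdsWithin p V).NeBot := mem_closure_iff_nhdsWithin_neBot.1 hclos
  have hfg : f p = g p := by
    have h1 : Filter.Tendsto f (nhdsWithin p V) (nhds (f p)) :=
      hf.continuousAt.continuousWithinAt
    have h2 : Filter.Tendsto g (nhdsWithin p V) (nhds (g p)) :=
      hg.continuousAt.continuousWithinAt
    have h3 : Filter.Tendsto f (nhdsWithin p V) (nhds (g p)) := by
      apply h2.congr'
      filter_upwards [self_mem_nhdsWithin] with x hx
      exact (heq x hx).symm
    exact tendsto_nhds_unique h1 h3
  refine ⟨hfg, ?_⟩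
  have hfw : HasFDerivWithinAt f f' V p := hf.hasFDerivWithinAt
  have hgw : HasFDerivWithinAt f g' V p :=
    hg.hasFDerivWithinAt.congr (fun x hx => heq x hx) hfg
  exact hUD.eq hfw hgw
end

section
/- Let n ≥ 1, let V ⊆ ℝⁿ be a Lebesgue measurable set, and suppose 0 is a Lebesgue density point of V. Then for every r > 0, the set {v/‖v‖ : v ∈ V ∩ B(0,r), v ≠ 0} of normalized directions of points of V near 0 is dense in the unit sphere {x ∈ ℝⁿ : ‖x‖ = 1}. -/
open MeasureTheory Pointwise

/-- The density-point argument inside the proof of Lemma 3.27: if `0` is a Lebesgue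
density point of a measurable set `V ⊆ ℝⁿ` (`n ≥ 1`), then for every `r > 0` the set of
normalized directions `v/‖v‖` of nonzero points `v ∈ V ∩ B(0,r)` is dense in the unit
sphere. -/
theorem directions_of_density_point_dense
    (n : ℕ) (hn : 1 ≤ n)
    (V : Set (EuclideanSpace ℝ (Fin n))) (hV : MeasurableSet V)
    (hdensity : Filter.Tendsto
      (fun r : ℝ => volume (V ∩ Metric.ball (0 : EuclideanSpace ℝ (Fin n)) r) /
        volume (Metric.ball (0 : EuclideanSpace ℝ (Fin n)) r))
      (nhdsWithin 0 (Set.Ioi 0)) (nhds 1)) :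
    ∀ r : ℝ, 0 < r →
      Metric.sphere (0 : EuclideanSpace ℝ (Fin n)) 1 ⊆
        closure ((fun v => ‖v‖⁻¹ • v) ''
          ((V ∩ Metric.ball (0 : EuclideanSpace ℝ (Fin n)) r) \ {0})) := by
  intro r hr u hu
  by_contra hcl
  rw [Metric.mem_closure_iff] at hcl
  push_neg at hcl
  obtain ⟨ε, hε, hsep⟩ := hcl
  have hu1 : ‖u‖ = 1 := by simpa using hu
  -- the open cone of directions near u
  set C : Set (EuclideanSpace ℝ (Fin n)) :=
    {v | v ≠ 0} ∩ (fun v : EuclideanSpace ℝ (Fin n) => ‖v‖⁻¹ • v) ⁻¹' Metric.ball u ε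
    with hCdef
  have hCopen : IsOpen C := by
    apply ContinuousOn.isOpen_inter_preimage _ _ Metric.isOpen_ball
    · refine ContinuousOn.smul (f := fun v : EuclideanSpace ℝ (Fin n) => ‖v‖⁻¹) (g := id) ?_ continuousOn_id
      exact (continuous_norm.continuousOn).inv₀ (fun x hx => norm_ne_zero_iff.mpr hx)
    · exact isOpen_compl_singleton
  -- C is invariant under positive scaling
  have hCcone : ∀ s : ℝ, 0 < s → ∀ v : EuclideanSpace ℝ (Fin n), s • v ∈ C ↔ v ∈ C := by
    intro s hs v
    have key : ∀ w : EuclideanSpace ℝ (Fin n), w ≠ 0 →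
        ‖s • w‖⁻¹ • (s • w) = ‖w‖⁻¹ • w := by
      intro w hw
      rw [norm_smul, Real.norm_of_nonneg hs.le, mul_inv, smul_smul]
      congr 1
      rw [mul_comm s⁻¹ ‖w‖⁻¹, mul_assoc, inv_mul_cancel₀ hs.ne', mul_one]
    constructor
    · rintro ⟨h1, h2⟩
      have hv : v ≠ 0 := by intro h; apply h1; simp [h]
      refine ⟨hv, ?_⟩
      rwa [Set.mem_preimage, key v hv] at h2
    · rintro ⟨h1, h2⟩
      have hv : v ≠ 0 := h1
      refine ⟨smul_ne_zero hs.ne' hv, ?_⟩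
      rw [Set.mem_preimage, key v hv]
      exact h2
  -- nonempty intersection with the unit ball
  have hne : (C ∩ Metric.ball (0 : EuclideanSpace ℝ (Fin n)) 1).Nonempty := by
    refine ⟨(1/2 : ℝ) • u, ⟨?_, ?_⟩, ?_⟩
    · apply smul_ne_zero (by norm_num)
      intro h; rw [h] at hu1; simp at hu1
    · have : ‖(1/2 : ℝ) • u‖⁻¹ • ((1/2:ℝ) • u) = u := by
        rw [norm_smul, hu1, Real.norm_of_nonneg (by norm_num : (0:ℝ) ≤ 1/2), smul_smul]
        norm_num
      simp only [Set.mem_preimage, this]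
      exact Metric.mem_ball_self hε
    · rw [Metric.mem_ball, dist_zero_right, norm_smul, hu1]
      norm_num
  set b : ENNReal := volume (C ∩ Metric.ball (0 : EuclideanSpace ℝ (Fin n)) 1) with hb
  set a : ENNReal := volume (Metric.ball (0 : EuclideanSpace ℝ (Fin n)) 1) with ha
  have hbpos : 0 < b := (hCopen.inter Metric.isOpen_ball).measure_pos volume hne
  have hapos : 0 < a := Metric.measure_ball_pos volume 0 one_pos
  have hbfin : b < ⊤ := lt_of_le_of_lt (measure_mono Set.inter_subset_right)
      measure_ball_lt_top
  have hafin : a < ⊤ := measure_ball_lt_top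
  -- scaling identities
  have hscale : ∀ s : ℝ, 0 < s →
      volume (C ∩ Metric.ball (0 : EuclideanSpace ℝ (Fin n)) s) = ENNReal.ofReal (s ^ n) * b ∧
      volume (Metric.ball (0 : EuclideanSpace ℝ (Fin n)) s) = ENNReal.ofReal (s ^ n) * a := by
    intro s hs
    have hball : Metric.ball (0 : EuclideanSpace ℝ (Fin n)) s
        = s • Metric.ball (0 : EuclideanSpace ℝ (Fin n)) 1 :=
      (smul_unitBall_of_pos hs).symm
    have hC : C = s • C := by
      ext v
      constructor
      · intro hv
        refine ⟨s⁻¹ • v, ?_, ?_⟩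
        · rw [← hCcone s hs, smul_inv_smul₀ hs.ne']; exact hv
        · exact smul_inv_smul₀ hs.ne' v
      · rintro ⟨w, hw, rfl⟩
        exact (hCcone s hs w).mpr hw
    have h1 : C ∩ Metric.ball (0 : EuclideanSpace ℝ (Fin n)) s
        = s • (C ∩ Metric.ball (0 : EuclideanSpace ℝ (Fin n)) 1) := by
      rw [Set.smul_set_inter₀ hs.ne', ← hC, ← hball]
    have hm : ∀ t : Set (EuclideanSpace ℝ (Fin n)),
        volume (s • t) = ENNReal.ofReal (s ^ n) * volume t := by
      intro t
      rw [Measure.addHaar_smul volume s t, finrank_euclideanSpace_fin,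
        abs_of_nonneg (pow_nonneg hs.le n)]
    exact ⟨by rw [h1, hm], by rw [hball, hm]⟩
  -- the ratio bound
  set k : ENNReal := 1 - b / a with hk
  have hklt : k < 1 := by
    apply ENNReal.sub_lt_self ENNReal.one_ne_top one_ne_zero
    exact (ENNReal.div_pos hbpos.ne' hafin.ne).ne'
  have hbd : ∀ s : ℝ, 0 < s → s ≤ r →
      volume (V ∩ Metric.ball (0 : EuclideanSpace ℝ (Fin n)) s) /
        volume (Metric.ball (0 : EuclideanSpace ℝ (Fin n)) s) ≤ k := by
    intro s hs hsr
    obtain ⟨hCs, hBs⟩ := hscale s hs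
    set B := Metric.ball (0 : EuclideanSpace ℝ (Fin n)) s with hB
    have hdisj : V ∩ B ⊆ B \ (C ∩ B) := by
      rintro v ⟨hvV, hvB⟩
      refine ⟨hvB, ?_⟩
      rintro ⟨⟨hv0, hvdir⟩, -⟩
      have hvmem : v ∈ (V ∩ Metric.ball (0 : EuclideanSpace ℝ (Fin n)) r) \ {0} :=
        ⟨⟨hvV, Metric.ball_subset_ball hsr hvB⟩, hv0⟩
      have h2 := hsep (‖v‖⁻¹ • v) ⟨v, hvmem, rfl⟩
      rw [Set.mem_preimage, Metric.mem_ball, dist_comm] at hvdir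
      linarith
    have hmeas : volume (B \ (C ∩ B)) = volume B - volume (C ∩ B) := by
      apply measure_diff Set.inter_subset_right
        ((hCopen.inter Metric.isOpen_ball).measurableSet.nullMeasurableSet)
      exact (lt_of_le_of_lt (measure_mono Set.inter_subset_right) measure_ball_lt_top).ne
    have hle : volume (V ∩ B) ≤ volume B - volume (C ∩ B) := by
      rw [← hmeas]; exact measure_mono hdisj
    have hc0 : ENNReal.ofReal (s ^ n) ≠ 0 := by
      simp [ENNReal.ofReal_eq_zero, not_le, pow_pos hs]
    have hctop : ENNReal.ofReal (s ^ n) ≠ ⊤ := ENNReal.ofReal_ne_top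
    have hB0 : volume B ≠ 0 := by rw [hBs]; exact mul_ne_zero hc0 hapos.ne'
    have hBtop : volume B ≠ ⊤ := by rw [hBs]; exact ENNReal.mul_ne_top hctop hafin.ne
    calc volume (V ∩ B) / volume B
        ≤ (volume B - volume (C ∩ B)) / volume B := ENNReal.div_le_div_right hle _
      _ = volume B / volume B - volume (C ∩ B) / volume B :=
          ENNReal.sub_div (fun _ _ => hB0)
      _ = 1 - b / a := by
          rw [ENNReal.div_self hB0 hBtop, hBs, hCs,
            ENNReal.mul_div_mul_left _ _ hc0 hctop]
  have hev : ∀ᶠ s in nhdsWithin (0:ℝ) (Set.Ioi 0),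
      volume (V ∩ Metric.ball (0 : EuclideanSpace ℝ (Fin n)) s) /
        volume (Metric.ball (0 : EuclideanSpace ℝ (Fin n)) s) ≤ k := by
    filter_upwards [Ioo_mem_nhdsGT_of_mem (Set.mem_Ico.mpr ⟨le_refl 0, hr⟩)] with s hs
    exact hbd s hs.1 hs.2.le
  have hfin : (1 : ENNReal) ≤ k := le_of_tendsto hdensity hev
  exact absurd hfin (not_le.mpr hklt)
end

section
/- Let d ≥ 1, R > 0, and let f : ℂᵈ → ℂ be analytic on the open ball B = B(0, R) ⊆ ℂᵈ. Suppose there is a nonempty open set U ⊆ ℂᵈ such that for every v ∈ U there exists ε > 0 with the property that for all t ∈ ℂ with |t| < ε one has t·v ∈ B and f(t·v) = 0. Then f vanishes identically on B. -/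
/-- The analytic core of Lemma 3.83: let `f` be analytic on the ball `B = B(0,R) ⊆ ℂᵈ`
(`d ≥ 1`, `R > 0`). If there is a nonempty open set `U ⊆ ℂᵈ` of directions such that for
every `v ∈ U` the function `f` vanishes on a short segment `{t·v : |t| < ε}` through the
origin, then `f` vanishes identically on `B`. -/
theorem analytic_vanishing_on_cone_of_directions
    (d : ℕ) (hd : 1 ≤ d) (R : ℝ) (hR : 0 < R)
    (f : EuclideanSpace ℂ (Fin d) → ℂ)
    (hf : AnalyticOnNhd ℂ f (Metric.ball (0 : EuclideanSpace ℂ (Fin d)) R))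
    (U : Set (EuclideanSpace ℂ (Fin d))) (hU : IsOpen U) (hUne : U.Nonempty)
    (hvan : ∀ v ∈ U, ∃ ε : ℝ, 0 < ε ∧ ∀ t : ℂ, ‖t‖ < ε →
      t • v ∈ Metric.ball (0 : EuclideanSpace ℂ (Fin d)) R ∧ f (t • v) = 0) :
    ∀ x ∈ Metric.ball (0 : EuclideanSpace ℂ (Fin d)) R, f x = 0 := by
  haveI : Nonempty (Fin d) := ⟨⟨0, hd⟩⟩
  -- Step 0: find a nonzero point of `U`.
  obtain ⟨u, hu⟩ := hUne
  obtain ⟨v0, hv0U, hv0ne⟩ : ∃ v0 ∈ U, v0 ≠ 0 := by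
    by_cases h : u = 0
    · subst h
      obtain ⟨r, hr, hball⟩ := Metric.isOpen_iff.1 hU 0 hu
      obtain ⟨x, hx⟩ := exists_ne (0 : EuclideanSpace ℂ (Fin d))
      refine ⟨(r / (2 * ‖x‖) : ℝ) • x, hball ?_, ?_⟩
      · rw [Metric.mem_ball, dist_zero_right, norm_smul]
        have hxn : (0:ℝ) < ‖x‖ := norm_pos_iff.2 hx
        rw [Real.norm_eq_abs, abs_of_pos (by positivity)]
        rw [div_mul_eq_mul_div, mul_comm, mul_div_assoc]
        calc ‖x‖ * (r / (2 * ‖x‖)) = r / 2 := by field_simp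
          _ < r := by linarith
      · have hxn : (0:ℝ) < ‖x‖ := norm_pos_iff.2 hx
        exact smul_ne_zero (by positivity) hx
    · exact ⟨u, hu, h⟩
  -- Step 1: for any nonzero `v ∈ U`, `f (t • v) = 0` whenever `‖t‖ < R / ‖v‖`.
  have key : ∀ v ∈ U, v ≠ 0 → ∀ t : ℂ, ‖t‖ < R / ‖v‖ → f (t • v) = 0 := by
    intro v hvU hvne t ht
    obtain ⟨ε, hε, hv⟩ := hvan v hvU
    have hvn : (0:ℝ) < ‖v‖ := norm_pos_iff.2 hvne
    set L : ℂ →L[ℂ] EuclideanSpace ℂ (Fin d) := ContinuousLinearMap.toSpanSingleton ℂ v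
    have hmaps : Set.MapsTo (fun t : ℂ => t • v) (Metric.ball (0:ℂ) (R / ‖v‖))
        (Metric.ball (0 : EuclideanSpace ℂ (Fin d)) R) := by
      intro s hs
      rw [Metric.mem_ball, dist_zero_right] at hs ⊢
      rw [norm_smul]
      calc ‖s‖ * ‖v‖ < (R / ‖v‖) * ‖v‖ := by gcongr
        _ = R := by field_simp
    have hg : AnalyticOnNhd ℂ (fun t : ℂ => f (t • v)) (Metric.ball (0:ℂ) (R / ‖v‖)) := by
      have := hf.comp (L.analyticOnNhd (Metric.ball (0:ℂ) (R / ‖v‖))) hmaps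
      simpa [L, Function.comp_def, ContinuousLinearMap.toSpanSingleton_apply] using this
    have h0 : (0:ℂ) ∈ Metric.ball (0:ℂ) (R / ‖v‖) := by
      simp [Metric.mem_ball, div_pos hR hvn]
    have hev : (fun t : ℂ => f (t • v)) =ᶠ[nhds (0:ℂ)] 0 := by
      filter_upwards [Metric.ball_mem_nhds (0:ℂ) hε] with s hs
      exact (hv s (by rwa [Metric.mem_ball, dist_zero_right] at hs)).2
    have := hg.eqOn_zero_of_preconnected_of_eventuallyEq_zero
      (convex_ball (0:ℂ) (R / ‖v‖)).isPreconnected h0 hev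
    exact this (by rwa [Metric.mem_ball, dist_zero_right])
  -- Step 2: `f` vanishes on an open neighborhood of `z0 = t0 • v0`.
  have hv0n : (0:ℝ) < ‖v0‖ := norm_pos_iff.2 hv0ne
  obtain ⟨r', hr', hball⟩ := Metric.isOpen_iff.1 hU v0 hv0U
  set r : ℝ := min r' (‖v0‖ / 2) with hrdef
  have hrpos : 0 < r := lt_min hr' (by positivity)
  set t0 : ℝ := R / (2 * ‖v0‖) with ht0def
  have ht0pos : 0 < t0 := by positivity
  set z0 : EuclideanSpace ℂ (Fin d) := (t0 : ℂ) • v0 with hz0def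
  have hz0mem : z0 ∈ Metric.ball (0 : EuclideanSpace ℂ (Fin d)) R := by
    rw [Metric.mem_ball, dist_zero_right, hz0def, norm_smul, Complex.norm_real,
      Real.norm_eq_abs, abs_of_pos ht0pos, ht0def]
    calc R / (2 * ‖v0‖) * ‖v0‖ = R / 2 := by field_simp
      _ < R := by linarith
  have hev : f =ᶠ[nhds z0] 0 := by
    filter_upwards [Metric.ball_mem_nhds z0 (by positivity : (0:ℝ) < t0 * r)] with w hw
    set v : EuclideanSpace ℂ (Fin d) := ((t0 : ℂ))⁻¹ • w with hvdef
    have ht0ne : ((t0 : ℝ) : ℂ) ≠ 0 := by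
      exact_mod_cast ne_of_gt ht0pos
    have hwv : w = (t0 : ℂ) • v := by
      rw [hvdef, smul_smul, mul_inv_cancel₀ ht0ne, one_smul]
    have hvnear : v ∈ Metric.ball v0 r := by
      rw [Metric.mem_ball]
      have : v - v0 = ((t0 : ℂ))⁻¹ • (w - z0) := by
        rw [hvdef, hz0def, smul_sub, smul_smul, inv_mul_cancel₀ ht0ne, one_smul]
      rw [dist_eq_norm, this, norm_smul, norm_inv, Complex.norm_real, Real.norm_eq_abs,
        abs_of_pos ht0pos]
      rw [Metric.mem_ball, dist_eq_norm] at hw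
      calc t0⁻¹ * ‖w - z0‖ < t0⁻¹ * (t0 * r) := by gcongr
        _ = r := by field_simp
    have hvU : v ∈ U := hball (Metric.ball_subset_ball (min_le_left _ _) hvnear)
    have hvnorm : ‖v‖ < 2 * ‖v0‖ := by
      have h1 : ‖v - v0‖ < r := by rwa [Metric.mem_ball, dist_eq_norm] at hvnear
      have h2 : r ≤ ‖v0‖ / 2 := min_le_right _ _
      calc ‖v‖ = ‖v - v0 + v0‖ := by rw [sub_add_cancel]
        _ ≤ ‖v - v0‖ + ‖v0‖ := norm_add_le _ _
        _ < 2 * ‖v0‖ := by linarith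
    have hvne : v ≠ 0 := by
      intro h
      rw [h] at hvnear
      rw [Metric.mem_ball, dist_comm, dist_zero_right] at hvnear
      have h2 : r ≤ ‖v0‖ / 2 := min_le_right _ _
      linarith
    have hvnpos : (0:ℝ) < ‖v‖ := norm_pos_iff.2 hvne
    have ht0lt : ‖((t0 : ℝ) : ℂ)‖ < R / ‖v‖ := by
      rw [Complex.norm_real, Real.norm_eq_abs, abs_of_pos ht0pos, ht0def]
      rw [div_lt_div_iff₀ (by positivity) hvnpos]
      calc R * ‖v‖ < R * (2 * ‖v0‖) := by gcongr
        _ = R * (2 * ‖v0‖) := rfl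
      -- need strict inequality: done above
    rw [hwv]
    exact key v hvU hvne _ ht0lt
  -- Step 3: identity theorem on the ball.
  exact hf.eqOn_zero_of_preconnected_of_eventuallyEq_zero
    (convex_ball (0 : EuclideanSpace ℂ (Fin d)) R).isPreconnected hz0mem hev
end
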